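/- In a degenerate direction where κ₁(η) = κ₂(η) = κ* > 0, the nonzero eigenvalues of the first-order symbol B₁(η) are exactly ±√κ* and ±√(κ* + γ²). -/

import Mathlib

open Matrix Complex

theorem det_fin_five' (R : Type*) [CommRing R] (a00 a01 a02 a03 a04 a10 a11 a12 a13 a14 a20 a21 a22 a23 a24 a30 a31 a32 a33 a34 a40 a41 a42 a43 a44 : R) :
    det !![a00,a01,a02,a03,a04; a10,a11,a12,a13,a14; a20,a21,a22,a23,a24; a30,a31,a32,a33,a34; a40,a41,a42,a43,a44] =
      a00*a11*a22*a33*a44 - a00*a11*a22*a34*a43 - a00*a11*a23*a32*a44 + a00*a11*a23*a34*a42 + a00*a11*a24*a32*a43 - a00*a11*a24*a33*a42 - a00*a12*a21*a33*a44 + a00*a12*a21*a34*a43 + a00*a12*a23*a31*a44 - a00*a12*a23*a34*a41 - a00*a12*a24*a31*a43 + a00*a12*a24*a33*a41 + a00*a13*a21*a32*a44 - a00*a13*a21*a34*a42 - a00*a13*a22*a31*a44 + a00*a13*a22*a34*a41 + a00*a13*a24*a31*a42 - a00*a13*a24*a32*a41 - a00*a14*a21*a32*a43 + a00*a14*a21*a33*a42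 + a00*a14*a22*a31*a43 - a00*a14*a22*a33*a41 - a00*a14*a23*a31*a42 + a00*a14*a23*a32*a41 - a01*a10*a22*a33*a44 + a01*a10*a22*a34*a43 + a01*a10*a23*a32*a44 - a01*a10*a23*a34*a42 - a01*a10*a24*a32*a43 + a01*a10*a24*a33*a42 + a01*a12*a20*a33*a44 - a01*a12*a20*a34*a43 - a01*a12*a23*a30*a44 + a01*a12*a23*a34*a40 + a01*a12*a24*a30*a43 - a01*a12*a24*a33*a40 - a01*a13*a20*a32*a44 + a01*a13*a20*a34*a42 + a01*a13*a22*a30*a44 - a01*a13*a22*a34*a40 - a01*a13*a24*a30*a42 + a01*a13*a24*a32*a40 + a01*a14*a20*a32*a43 - a01*a14*a20*a33*a42 - a01*a14*a22*a30*a43 + a01*a14*a22*a33*a40 + a01*a14*a23*a30*a42 - a01*a14*a23*a32*a40 + a02*a10*a21*a33*a44 - a02*a10*a21*a34*a43 - a02*a10*a23*a31*a44 + a02*a10*a23*a34*a41 + a02*a10*a24*a31*a43 - a02*a10*a24*a33*a41 - a02*a11*a20*a33*a44 + a02*a11*a20*a34*a43 + a02*a11*a23*a30*a44 - a02*a11*a23*a34*a40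 - a02*a11*a24*a30*a43 + a02*a11*a24*a33*a40 + a02*a13*a20*a31*a44 - a02*a13*a20*a34*a41 - a02*a13*a21*a30*a44 + a02*a13*a21*a34*a40 + a02*a13*a24*a30*a41 - a02*a13*a24*a31*a40 - a02*a14*a20*a31*a43 + a02*a14*a20*a33*a41 + a02*a14*a21*a30*a43 - a02*a14*a21*a33*a40 - a02*a14*a23*a30*a41 + a02*a14*a23*a31*a40 - a03*a10*a21*a32*a44 + a03*a10*a21*a34*a42 + a03*a10*a22*a31*a44 - a03*a10*a22*a34*a41 - a03*a10*a24*a31*a42 + a03*a10*a24*a32*a41 + a03*a11*a20*a32*a44 - a03*a11*a20*a34*a42 - a03*a11*a22*a30*a44 + a03*a11*a22*a34*a40 + a03*a11*a24*a30*a42 - a03*a11*a24*a32*a40 - a03*a12*a20*a31*a44 + a03*a12*a20*a34*a41 + a03*a12*a21*a30*a44 - a03*a12*a21*a34*a40 - a03*a12*a24*a30*a41 + a03*a12*a24*a31*a40 + a03*a14*a20*a31*a42 - a03*a14*a20*a32*a41 - a03*a14*a21*a30*a42 + a03*a14*a21*a32*a40 + a03*a14*a22*a30*a41 - a03*a14*a22*a31*a40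 + a04*a10*a21*a32*a43 - a04*a10*a21*a33*a42 - a04*a10*a22*a31*a43 + a04*a10*a22*a33*a41 + a04*a10*a23*a31*a42 - a04*a10*a23*a32*a41 - a04*a11*a20*a32*a43 + a04*a11*a20*a33*a42 + a04*a11*a22*a30*a43 - a04*a11*a22*a33*a40 - a04*a11*a23*a30*a42 + a04*a11*a23*a32*a40 + a04*a12*a20*a31*a43 - a04*a12*a20*a33*a41 - a04*a12*a21*a30*a43 + a04*a12*a21*a33*a40 + a04*a12*a23*a30*a41 - a04*a12*a23*a31*a40 - a04*a13*a20*a31*a42 + a04*a13*a20*a32*a41 + a04*a13*a21*a30*a42 - a04*a13*a21*a32*a40 - a04*a13*a22*a30*a41 + a04*a13*a22*a31*a40 := by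
  simp [det_succ_row_zero, ← Fin.succ_castSucc, Fin.sum_univ_succ, Fin.succAbove,
    show Fin.castSucc (2:Fin 4) = (2:Fin 5) by decide, show Fin.castSucc (2:Fin 3) = (2:Fin 4) from rfl]
  ring


/-- In a degenerate direction (`κ₁(η) = κ₂(η) = κ* > 0`) the nonzero eigenvalues of
the first-order symbol `B₁(η)` are exactly `±√κ*` and `±√(κ* + γ²)`. -/
theorem degenerate_direction_eigenvalues
    (κstar γ a₁ a₂ : ℝ) (hκ : 0 < κstar) (hγ : γ ≠ 0)
    (ha : a₁ ^ 2 + a₂ ^ 2 = 1)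
    (B₁ : Matrix (Fin 5) (Fin 5) ℂ)
    (hB₁ : B₁ = !![(Real.sqrt κstar : ℂ), 0, 0, 0, I * γ * a₁;
                   0, (Real.sqrt κstar : ℂ), 0, 0, I * γ * a₂;
                   0, 0, (-(Real.sqrt κstar) : ℂ), 0, I * γ * a₁;
                   0, 0, 0, (-(Real.sqrt κstar) : ℂ), I * γ * a₂;
                   -(I * γ / 2) * a₁, -(I * γ / 2) * a₂,
                   -(I * γ / 2) * a₁, -(I * γ / 2) * a₂, 0]) :
    ∀ ν : ℂ, ν ≠ 0 →
      ((ν • (1 : Matrix (Fin 5) (Fin 5) ℂ) - B₁).det = 0 ↔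
        ν = (Real.sqrt κstar : ℂ) ∨ ν = -(Real.sqrt κstar : ℂ) ∨
        ν = (Real.sqrt (κstar + γ ^ 2) : ℂ) ∨ ν = -(Real.sqrt (κstar + γ ^ 2) : ℂ)) := by
  intro ν hν
  set s : ℂ := (Real.sqrt κstar : ℂ) with hs_def
  set t : ℂ := (Real.sqrt (κstar + γ ^ 2) : ℂ) with ht_def
  have hs2 : s ^ 2 = (κstar : ℂ) := by
    rw [hs_def]; norm_cast; exact Real.sq_sqrt hκ.le
  have ht2 : t ^ 2 = (κstar : ℂ) + (γ : ℂ) ^ 2 := by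
    rw [ht_def]; norm_cast; exact Real.sq_sqrt (by positivity)
  have hu : (I * γ * a₁) ^ 2 + (I * γ * a₂) ^ 2 = -(γ : ℂ) ^ 2 := by
    have haC : (a₁ : ℂ) ^ 2 + (a₂ : ℂ) ^ 2 = 1 := by norm_cast
    have hI : I ^ 2 = -1 := I_sq
    have : (I * (γ:ℂ) * a₁) ^ 2 + (I * γ * a₂) ^ 2 = I ^ 2 * γ ^ 2 * ((a₁:ℂ) ^ 2 + a₂ ^ 2) := by
      ring
    rw [this, hI, haC]; ring
  have hM : ν • (1 : Matrix (Fin 5) (Fin 5) ℂ) - B₁ =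
      !![ν - s, 0, 0, 0, -(I * γ * a₁);
         0, ν - s, 0, 0, -(I * γ * a₂);
         0, 0, ν + s, 0, -(I * γ * a₁);
         0, 0, 0, ν + s, -(I * γ * a₂);
         I * γ / 2 * a₁, I * γ / 2 * a₂,
         I * γ / 2 * a₁, I * γ / 2 * a₂, ν] := by
    subst hB₁
    ext i j
    fin_cases i <;> fin_cases j <;>
      simp [Matrix.one_apply] <;> ring
  have hdet : (ν • (1 : Matrix (Fin 5) (Fin 5) ℂ) - B₁).det =
      ν * ((ν - s) * (ν + s)) * ((ν - t) * (ν + t)) := by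
    rw [hM, det_fin_five']
    linear_combination ν * (ν ^ 2 - s ^ 2) * ht2 - ν * (ν ^ 2 - s ^ 2) * hs2 +
      ν * (ν ^ 2 - s ^ 2) * hu
  rw [hdet]
  simp only [mul_eq_zero, hν, false_or, sub_eq_zero, add_eq_zero_iff_eq_neg]
  tauto
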